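/- Fix N ≥ 1 and let e_m denote the elementary symmetric polynomial of degree m in x_1,…,x_N, and set E(z) = Σ_{m≥0} e_m z^m (a polynomial in z of degree N) regarded in ℤ[x_1,…,x_N][t][[z]]. Then (E(tz) − t·E(z)) · (Σ_{n≥0} Σ_{j≥0} Y_{n,j}(x_1,…,x_N) t^j z^n) = (1−t)·E(z), where E(tz) = Σ_{m≥0} e_m t^m z^m and Y_{0,0}=1. (This is the N-variable truncation of the Smirnov word generating function identity Σ Y_{n,j} t^j z^n = (1−t)E(z)/(E(zt)−tE(z)).) -/

import Mathlib

open scoped Classical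

/-- The descent number of a word `w : Fin n → Fin N`. -/
def desW {N n : ℕ} (w : Fin n → Fin N) : ℕ :=
  ∑ j ∈ Finset.range n,
    if h : j + 1 < n then
      (if (w ⟨j + 1, h⟩ : ℕ) < (w ⟨j, Nat.lt_of_succ_lt h⟩ : ℕ) then 1 else 0)
    else 0

/-- The Smirnov enumerator `Y_{n,j}(x_1,…,x_N)`: the sum of `x_{w(1)}⋯x_{w(n)}` over
all words of length `n` over `[N]` with no equal adjacent letters and `j` descents. -/
noncomputable def smirnovY (N n j : ℕ) : MvPolynomial (Fin N) ℤ :=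
  ∑ w ∈ Finset.univ.filter (fun w : Fin n → Fin N =>
      (∀ i : ℕ, ∀ h : i + 1 < n, w ⟨i + 1, h⟩ ≠ w ⟨i, Nat.lt_of_succ_lt h⟩) ∧ desW w = j),
    ∏ i, MvPolynomial.X (w i)

/-- `E(z) = ∑_{m≥0} e_m z^m`, a power series in `z` over `ℤ[x_1,…,x_N][t]`. -/
noncomputable def Eser (N : ℕ) : PowerSeries (Polynomial (MvPolynomial (Fin N) ℤ)) :=
  PowerSeries.mk fun m => Polynomial.C (MvPolynomial.esymm (Fin N) ℤ m)

/-- `E(tz) = ∑_{m≥0} e_m t^m z^m`. -/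
noncomputable def Esert (N : ℕ) : PowerSeries (Polynomial (MvPolynomial (Fin N) ℤ)) :=
  PowerSeries.mk fun m => Polynomial.C (MvPolynomial.esymm (Fin N) ℤ m) * Polynomial.X ^ m

/-- The variable `t`, as a constant power series in `z`. -/
noncomputable def tConst (N : ℕ) : PowerSeries (Polynomial (MvPolynomial (Fin N) ℤ)) :=
  PowerSeries.C (R := Polynomial (MvPolynomial (Fin N) ℤ)) Polynomial.X

namespace SmirnovAux

open Finset PowerSeries

/-- Base ring `ℤ[x][t]`. -/
abbrev R (N : ℕ) := Polynomial (MvPolynomial (Fin N) ℤ)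

/-- Smirnov predicate, exactly as in the statement. -/
abbrev SmirP {N n : ℕ} (w : Fin n → Fin N) : Prop :=
  ∀ i : ℕ, ∀ h : i + 1 < n, w ⟨i + 1, h⟩ ≠ w ⟨i, Nat.lt_of_succ_lt h⟩

/-- The weight of a word: `x_w · t^{des w}`. -/
noncomputable def term {N n : ℕ} (w : Fin n → Fin N) : R N :=
  Polynomial.C (∏ k, MvPolynomial.X (w k)) * Polynomial.X ^ desW w

/-- Sum of weights of Smirnov words of length `n`. -/
noncomputable def Pp (N n : ℕ) : R N :=
  ∑ w ∈ Finset.univ.filter (fun w : Fin n → Fin N => SmirP w), term w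

/-- Sum of weights of Smirnov words of length `n+1` with first letter `i`. -/
noncomputable def Zp (N : ℕ) (n : ℕ) (i : Fin N) : R N :=
  ∑ w ∈ Finset.univ.filter (fun w : Fin (n + 1) → Fin N => SmirP w ∧ w 0 = i), term w

section ConsLemmas

variable {N n : ℕ}

lemma cons_mk_succ (i : Fin N) (v : Fin (n + 1) → Fin N) (k : ℕ) (h : k + 1 < n + 2) :
    (Fin.cons i v : Fin (n + 2) → Fin N) ⟨k + 1, h⟩ = v ⟨k, by omega⟩ := by
  have h' : (⟨k + 1, h⟩ : Fin (n + 2)) = Fin.succ ⟨k, by omega⟩ := rfl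
  rw [h', Fin.cons_succ]

lemma cons_mk_zero (i : Fin N) (v : Fin (n + 1) → Fin N) (h : 0 < n + 2) :
    (Fin.cons i v : Fin (n + 2) → Fin N) ⟨0, h⟩ = i := by
  have h' : (⟨0, h⟩ : Fin (n + 2)) = 0 := rfl
  rw [h', Fin.cons_zero]

lemma smirP_cons (i : Fin N) (v : Fin (n + 1) → Fin N) :
    SmirP (Fin.cons i v : Fin (n + 2) → Fin N) ↔ v 0 ≠ i ∧ SmirP v := by
  constructor
  · intro H
    constructor
    · have := H 0 (by omega)
      rw [cons_mk_succ, cons_mk_zero] at this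
      exact this
    · intro k hk
      have := H (k + 1) (by omega)
      rw [cons_mk_succ, cons_mk_succ] at this
      exact this
  · rintro ⟨h0, H⟩ k hk
    cases k with
    | zero =>
      rw [cons_mk_succ, cons_mk_zero]
      exact h0
    | succ k =>
      rw [cons_mk_succ, cons_mk_succ]
      exact H k (by omega)

lemma des_cons (i : Fin N) (v : Fin (n + 1) → Fin N) :
    desW (Fin.cons i v : Fin (n + 2) → Fin N)
      = (if (v 0 : ℕ) < (i : ℕ) then 1 else 0) + desW v := by
  unfold desW
  rw [Finset.sum_range_succ', add_comm]
  congr 1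
  · apply Finset.sum_congr rfl
    intro j hj
    by_cases h : j + 1 < n + 1
    · rw [dif_pos (by omega : (j + 1) + 1 < n + 2), dif_pos h,
        cons_mk_succ i v (j + 1), cons_mk_succ i v j]
    · rw [dif_neg (by omega), dif_neg h]

lemma term_cons (i : Fin N) (v : Fin (n + 1) → Fin N) :
    term (Fin.cons i v : Fin (n + 2) → Fin N)
      = (Polynomial.C (MvPolynomial.X i)
          * Polynomial.X ^ (if (v 0 : ℕ) < (i : ℕ) then 1 else 0)) * term v := by
  unfold term
  rw [des_cons]
  have hp : (∏ k : Fin (n + 2), MvPolynomial.X (R := ℤ) (Fin.cons i v k))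
      = MvPolynomial.X i * ∏ k : Fin (n + 1), MvPolynomial.X (v k) := by
    rw [Fin.prod_univ_succ]
    simp [Fin.cons_zero, Fin.cons_succ]
  rw [hp, map_mul, pow_add]
  ring

end ConsLemmas

section Comb

variable {N : ℕ}

lemma Zp_zero (i : Fin N) : Zp N 0 i = Polynomial.C (MvPolynomial.X i) := by
  unfold Zp
  have hfil : (Finset.univ.filter (fun w : Fin 1 → Fin N => SmirP w ∧ w 0 = i))
      = {fun _ => i} := by
    ext w
    simp only [Finset.mem_filter, Finset.mem_univ, true_and, Finset.mem_singleton]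
    constructor
    · rintro ⟨-, h0⟩
      funext k
      have : k = 0 := Subsingleton.elim _ _
      rw [this, h0]
    · rintro rfl
      exact ⟨fun k h => by omega, rfl⟩
  rw [hfil, Finset.sum_singleton]
  unfold term desW
  simp

lemma desW_le {n : ℕ} (w : Fin n → Fin N) : desW w ≤ n := by
  unfold desW
  calc ∑ j ∈ Finset.range n,
        (if h : j + 1 < n then
          (if (w ⟨j + 1, h⟩ : ℕ) < (w ⟨j, Nat.lt_of_succ_lt h⟩ : ℕ) then 1 else 0)
        else 0)
      ≤ ∑ _j ∈ Finset.range n, 1 := by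
        apply Finset.sum_le_sum
        intro j _
        split_ifs <;> omega
    _ = n := by simp

lemma Pp_eq (n : ℕ) :
    Pp N n = ∑ j ∈ Finset.range (n + 1), Polynomial.C (smirnovY N n j) * Polynomial.X ^ j := by
  unfold Pp
  rw [← Finset.sum_fiberwise_of_maps_to (g := desW) (t := Finset.range (n + 1))
    (fun w _ => Finset.mem_range.mpr (by have := desW_le w; omega)) term]
  apply Finset.sum_congr rfl
  intro j hj
  unfold smirnovY
  rw [map_sum, Finset.sum_mul, Finset.filter_filter]
  apply Finset.sum_congr rfl
  intro w hw
  have hdes : desW w = j := (Finset.mem_filter.mp hw).2.2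
  unfold term
  rw [hdes]

lemma Pp_zero : Pp N 0 = 1 := by
  unfold Pp
  have hfil : (Finset.univ.filter (fun w : Fin 0 → Fin N => SmirP w)) = Finset.univ := by
    apply Finset.filter_true_of_mem
    intro w _
    intro k h
    omega
  rw [hfil, Fintype.sum_unique]
  unfold term desW
  simp

lemma Pp_succ (n : ℕ) : Pp N (n + 1) = ∑ i : Fin N, Zp N n i := by
  unfold Pp Zp
  rw [← Finset.sum_fiberwise_of_maps_to (g := fun w => w 0) (t := Finset.univ)
    (fun w _ => Finset.mem_univ (w 0)) term]
  apply Finset.sum_congr rfl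
  intro i _
  rw [Finset.filter_filter]

lemma Zp_succ (n : ℕ) (i : Fin N) :
    Zp N (n + 1) i = Polynomial.C (MvPolynomial.X i) *
      (Polynomial.X * ∑ j ∈ Finset.univ.filter (fun j : Fin N => (j : ℕ) < (i : ℕ)), Zp N n j
        + ∑ j ∈ Finset.univ.filter (fun j : Fin N => (i : ℕ) < (j : ℕ)), Zp N n j) := by
  have key : ∀ j : Fin N,
      (∑ v ∈ Finset.univ.filter (fun v : Fin (n + 1) → Fin N => SmirP v ∧ v 0 = j),
        term (Fin.cons i v : Fin (n + 2) → Fin N))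
      = (Polynomial.C (MvPolynomial.X i)
          * Polynomial.X ^ (if (j : ℕ) < (i : ℕ) then 1 else 0)) * Zp N n j := by
    intro j
    unfold Zp
    rw [Finset.mul_sum]
    apply Finset.sum_congr rfl
    intro v hv
    rw [term_cons]
    have h0 : v 0 = j := (Finset.mem_filter.mp hv).2.2
    rw [h0]
  have step1 : Zp N (n + 1) i
      = ∑ j : Fin N, (if j = i then 0 else
          (Polynomial.C (MvPolynomial.X i)
            * Polynomial.X ^ (if (j : ℕ) < (i : ℕ) then 1 else 0)) * Zp N n j) := by
    unfold Zp
    rw [Finset.sum_filter]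
    rw [← Equiv.sum_comp (Fin.consEquiv (fun _ : Fin (n + 2) => Fin N))
      (fun w : Fin (n + 2) → Fin N => if SmirP w ∧ w 0 = i then term w else 0)]
    rw [Fintype.sum_prod_type]
    have hav : ∀ (a : Fin N) (v : Fin (n + 1) → Fin N),
        (Fin.consEquiv (fun _ : Fin (n + 2) => Fin N)) (a, v) = Fin.cons a v := fun _ _ => rfl
    have hrow : ∀ a : Fin N,
        (∑ v : Fin (n + 1) → Fin N,
          if SmirP ((Fin.consEquiv (fun _ : Fin (n + 2) => Fin N)) (a, v))
              ∧ ((Fin.consEquiv (fun _ : Fin (n + 2) => Fin N)) (a, v)) 0 = i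
          then term ((Fin.consEquiv (fun _ : Fin (n + 2) => Fin N)) (a, v)) else 0)
        = (if a = i then
            (∑ v : Fin (n + 1) → Fin N,
              if SmirP (Fin.cons a v : Fin (n + 2) → Fin N)
              then term (Fin.cons a v : Fin (n + 2) → Fin N) else 0) else 0) := by
      intro a
      by_cases ha : a = i
      · rw [if_pos ha]
        apply Finset.sum_congr rfl
        intro v _
        rw [hav]
        have hz : (Fin.cons a v : Fin (n + 2) → Fin N) 0 = a := Fin.cons_zero _ _
        by_cases hs : SmirP (Fin.cons a v : Fin (n + 2) → Fin N)
        · rw [if_pos ⟨hs, by rw [hz, ha]⟩, if_pos hs]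
        · rw [if_neg (by tauto), if_neg hs]
      · rw [if_neg ha]
        apply Finset.sum_eq_zero
        intro v _
        rw [hav]
        have hz : (Fin.cons a v : Fin (n + 2) → Fin N) 0 = a := Fin.cons_zero _ _
        rw [if_neg (by rw [hz]; tauto)]
    rw [Finset.sum_congr rfl (fun a _ => hrow a), Finset.sum_ite_eq' Finset.univ i]
    rw [if_pos (Finset.mem_univ i)]
    -- now: ∑ v, if SmirP (cons i v) then term (cons i v) else 0 = ∑ j, ...
    have hcond : ∀ v : Fin (n + 1) → Fin N,
        (if SmirP (Fin.cons i v : Fin (n + 2) → Fin N)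
          then term (Fin.cons i v : Fin (n + 2) → Fin N) else 0)
        = (if v 0 ≠ i ∧ SmirP v then term (Fin.cons i v : Fin (n + 2) → Fin N) else 0) := by
      intro v
      by_cases h : SmirP (Fin.cons i v : Fin (n + 2) → Fin N)
      · rw [if_pos h, if_pos ((smirP_cons i v).mp h)]
      · rw [if_neg h, if_neg (fun hc => h ((smirP_cons i v).mpr hc))]
    rw [Finset.sum_congr rfl (fun v _ => hcond v)]
    rw [← Finset.sum_fiberwise_of_maps_to (g := fun v : Fin (n + 1) → Fin N => v 0)
      (t := Finset.univ) (fun v _ => Finset.mem_univ (v 0))]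
    apply Finset.sum_congr rfl
    intro j _
    by_cases hj : j = i
    · rw [if_pos hj]
      apply Finset.sum_eq_zero
      intro v hv
      have h0 : v 0 = j := by
        have := (Finset.mem_filter.mp hv).2
        simpa using this
      rw [if_neg (by rw [h0, hj]; tauto)]
    · rw [if_neg hj]
      have hsets : (∑ v ∈ Finset.univ.filter (fun v : Fin (n + 1) → Fin N => v 0 = j),
            if v 0 ≠ i ∧ SmirP v
            then term (Fin.cons i v : Fin (n + 2) → Fin N) else 0)
          = ∑ v ∈ Finset.univ.filter (fun v : Fin (n + 1) → Fin N => SmirP v ∧ v 0 = j),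
              term (Fin.cons i v : Fin (n + 2) → Fin N) := by
        rw [Finset.sum_filter, Finset.sum_filter]
        apply Finset.sum_congr rfl
        intro v _
        by_cases h0 : v 0 = j
        · by_cases hs : SmirP v
          · rw [if_pos h0, if_pos (by exact ⟨by rw [h0]; exact fun hc => hj hc, hs⟩),
              if_pos ⟨hs, h0⟩]
          · rw [if_pos h0, if_neg (by tauto), if_neg (by tauto)]
        · rw [if_neg h0, if_neg (by tauto)]
      rw [hsets]
      exact key j
  rw [step1]
  rw [← Finset.sum_filter_add_sum_filter_not Finset.univ (fun j : Fin N => (j : ℕ) < (i : ℕ))]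
  have h1 : ∑ j ∈ Finset.univ.filter (fun j : Fin N => (j : ℕ) < (i : ℕ)),
      (if j = i then 0 else
        (Polynomial.C (MvPolynomial.X i)
          * Polynomial.X ^ (if (j : ℕ) < (i : ℕ) then 1 else 0)) * Zp N n j)
      = (Polynomial.C (MvPolynomial.X i) * Polynomial.X) *
          ∑ j ∈ Finset.univ.filter (fun j : Fin N => (j : ℕ) < (i : ℕ)), Zp N n j := by
    rw [Finset.mul_sum]
    apply Finset.sum_congr rfl
    intro j hj
    have hlt : (j : ℕ) < (i : ℕ) := by
      have := (Finset.mem_filter.mp hj).2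
      simpa using this
    rw [if_neg (by intro h; rw [h] at hlt; omega), if_pos hlt, pow_one, mul_assoc]
  have hset : Finset.univ.filter (fun j : Fin N => ¬ (j : ℕ) < (i : ℕ))
      = insert i (Finset.univ.filter (fun j : Fin N => (i : ℕ) < (j : ℕ))) := by
    ext j
    simp only [Finset.mem_filter, Finset.mem_univ, true_and, Finset.mem_insert, Fin.ext_iff]
    omega
  have h2 : ∑ j ∈ Finset.univ.filter (fun j : Fin N => ¬ (j : ℕ) < (i : ℕ)),
      (if j = i then 0 else
        (Polynomial.C (MvPolynomial.X i)
          * Polynomial.X ^ (if (j : ℕ) < (i : ℕ) then 1 else 0)) * Zp N n j)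
      = Polynomial.C (MvPolynomial.X i) *
          ∑ j ∈ Finset.univ.filter (fun j : Fin N => (i : ℕ) < (j : ℕ)), Zp N n j := by
    rw [hset, Finset.sum_insert (by simp), if_pos rfl, zero_add, Finset.mul_sum]
    apply Finset.sum_congr rfl
    intro j hj
    have hgt : (i : ℕ) < (j : ℕ) := by
      have := (Finset.mem_filter.mp hj).2
      simpa using this
    rw [if_neg (by intro h; rw [h] at hgt; omega), if_neg (by omega), pow_zero, mul_one]
  rw [h1, h2]
  ring

end Comb

section Series

variable {N : ℕ}

/-- Coefficient ring element `t·x_i`. -/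
noncomputable def cE (i : Fin N) : R N := Polynomial.X * Polynomial.C (MvPolynomial.X i)

noncomputable def tS (N : ℕ) : PowerSeries (R N) := PowerSeries.C (R := R N) Polynomial.X

noncomputable def xS (i : Fin N) : PowerSeries (R N) :=
  PowerSeries.C (R := R N) (Polynomial.C (MvPolynomial.X i))

noncomputable def Zser (i : Fin N) : PowerSeries (R N) :=
  PowerSeries.mk fun n => match n with
    | 0 => 0
    | m + 1 => Zp N m i

noncomputable def Sser (N : ℕ) (k : ℕ) : PowerSeries (R N) :=
  ∑ i ∈ Finset.univ.filter (fun i : Fin N => (i : ℕ) < k), Zser i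

noncomputable def Eup (N : ℕ) (k : ℕ) : PowerSeries (R N) :=
  ∏ i ∈ Finset.univ.filter (fun i : Fin N => k ≤ (i : ℕ)),
    (1 + PowerSeries.C (R := R N) (Polynomial.C (MvPolynomial.X i)) * PowerSeries.X)

noncomputable def Elo (N : ℕ) (k : ℕ) : PowerSeries (R N) :=
  ∏ i ∈ Finset.univ.filter (fun i : Fin N => (i : ℕ) < k),
    (1 + PowerSeries.C (R := R N) (cE i) * PowerSeries.X)

noncomputable def Dser (N : ℕ) : PowerSeries (R N) := Elo N N - tS N * Eup N 0

noncomputable def Dlt (N : ℕ) (k : ℕ) : PowerSeries (R N) :=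
  Dser N * Sser N k - (Eup N 0 - Eup N k * Elo N k)

lemma coeff_Zser_zero (i : Fin N) : PowerSeries.coeff (R := R N) 0 (Zser i) = 0 := by
  rw [Zser, PowerSeries.coeff_mk]

lemma coeff_Zser_succ (i : Fin N) (m : ℕ) :
    PowerSeries.coeff (R := R N) (m + 1) (Zser i) = Zp N m i := by
  rw [Zser, PowerSeries.coeff_mk]

lemma coeff_Sser_zero (k : ℕ) : PowerSeries.coeff (R := R N) 0 (Sser N k) = 0 := by
  rw [Sser, map_sum]
  exact Finset.sum_eq_zero fun i _ => coeff_Zser_zero i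

lemma coeff_Sser_succ (k m : ℕ) :
    PowerSeries.coeff (R := R N) (m + 1) (Sser N k)
      = ∑ i ∈ Finset.univ.filter (fun i : Fin N => (i : ℕ) < k), Zp N m i := by
  rw [Sser, map_sum]
  exact Finset.sum_congr rfl fun i _ => coeff_Zser_succ i m

lemma Zser_eq (i : Fin N) :
    Zser i = PowerSeries.X * (xS i *
      (1 + tS N * Sser N (i : ℕ) + Sser N N - Sser N ((i : ℕ) + 1))) := by
  apply PowerSeries.ext
  intro n
  cases n with
  | zero =>
    rw [coeff_Zser_zero]
    rw [PowerSeries.coeff_zero_eq_constantCoeff, map_mul, PowerSeries.constantCoeff_X,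
      zero_mul]
  | succ m =>
    rw [coeff_Zser_succ, PowerSeries.coeff_succ_X_mul]
    rw [xS, PowerSeries.coeff_C_mul]
    rw [map_sub, map_add, map_add]
    rw [tS, PowerSeries.coeff_C_mul]
    cases m with
    | zero =>
      rw [coeff_Sser_zero, coeff_Sser_zero, coeff_Sser_zero]
      rw [Zp_zero]
      simp
    | succ p =>
      rw [coeff_Sser_succ, coeff_Sser_succ, coeff_Sser_succ]
      have hone : PowerSeries.coeff (R := R N) (p + 1) (1 : PowerSeries (R N)) = 0 := by
        rw [PowerSeries.coeff_one]
        simp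
      rw [hone]
      have hN : Finset.univ.filter (fun j : Fin N => (j : ℕ) < N) = Finset.univ :=
        Finset.filter_true_of_mem (fun j _ => j.isLt)
      have hsplit : ∑ j ∈ Finset.univ.filter (fun j : Fin N => (j : ℕ) < N), Zp N p j
          = (∑ j ∈ Finset.univ.filter (fun j : Fin N => (j : ℕ) < (i : ℕ) + 1), Zp N p j)
            + ∑ j ∈ Finset.univ.filter (fun j : Fin N => (i : ℕ) < (j : ℕ)), Zp N p j := by
        rw [hN, ← Finset.sum_filter_add_sum_filter_not Finset.univ
          (fun j : Fin N => (j : ℕ) < (i : ℕ) + 1) (Zp N p)]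
        congr 1
        apply Finset.sum_congr _ (fun _ _ => rfl)
        ext j
        simp only [Finset.mem_filter, Finset.mem_univ, true_and]
        omega
      rw [hsplit, Zp_succ]
      ring
end Series

section Algebra

variable {N : ℕ}

lemma coeff_prodE (s : Finset (Fin N)) (c : Fin N → R N) :
    ∀ m : ℕ, PowerSeries.coeff (R := R N) m
        (∏ i ∈ s, (1 + PowerSeries.C (R := R N) (c i) * PowerSeries.X))
      = ∑ A ∈ s.powersetCard m, ∏ i ∈ A, c i := by
  induction s using Finset.induction_on with
  | empty =>
    intro m
    cases m with
    | zero => simp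
    | succ m =>
      rw [Finset.prod_empty, PowerSeries.coeff_one,
        Finset.powersetCard_eq_empty.mpr (by simp)]
      simp
  | insert a s ha ih =>
    intro m
    rw [Finset.prod_insert ha, add_mul, one_mul, map_add]
    cases m with
    | zero =>
      have h0 : PowerSeries.coeff (R := R N) 0
          (PowerSeries.C (R := R N) (c a) * PowerSeries.X *
            ∏ i ∈ s, (1 + PowerSeries.C (R := R N) (c i) * PowerSeries.X)) = 0 := by
        rw [PowerSeries.coeff_zero_eq_constantCoeff, map_mul, map_mul,
          PowerSeries.constantCoeff_X]
        ring
      rw [h0, ih 0, add_zero]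
      simp
    | succ m =>
      have h2 : PowerSeries.coeff (R := R N) (m + 1)
          (PowerSeries.C (R := R N) (c a) * PowerSeries.X *
            ∏ i ∈ s, (1 + PowerSeries.C (R := R N) (c i) * PowerSeries.X))
          = c a * PowerSeries.coeff (R := R N) m
              (∏ i ∈ s, (1 + PowerSeries.C (R := R N) (c i) * PowerSeries.X)) := by
        rw [mul_assoc, PowerSeries.coeff_C_mul, PowerSeries.coeff_succ_X_mul]
      have hinj : ∀ A ∈ s.powersetCard m, ∀ B ∈ s.powersetCard m,
          insert a A = insert a B → A = B := by
        intro A hA B hB hEq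
        have haA : a ∉ A := fun hmem => ha ((Finset.mem_powersetCard.mp hA).1 hmem)
        have haB : a ∉ B := fun hmem => ha ((Finset.mem_powersetCard.mp hB).1 hmem)
        have := congrArg (fun S => Finset.erase S a) hEq
        simpa [Finset.erase_insert haA, Finset.erase_insert haB] using this
      have hdisj : Disjoint (s.powersetCard (m + 1))
          ((s.powersetCard m).image (insert a)) := by
        rw [Finset.disjoint_left]
        intro A hA hA'
        have haA : a ∉ A := fun hmem => ha ((Finset.mem_powersetCard.mp hA).1 hmem)
        obtain ⟨B, hB, rfl⟩ := Finset.mem_image.mp hA'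
        exact haA (Finset.mem_insert_self a B)
      rw [h2, ih (m + 1), ih m, Finset.powersetCard_succ_insert ha,
        Finset.sum_union hdisj, Finset.sum_image hinj, Finset.mul_sum]
      congr 1
      apply Finset.sum_congr rfl
      intro A hA
      have haA : a ∉ A := fun hmem => ha ((Finset.mem_powersetCard.mp hA).1 hmem)
      rw [Finset.prod_insert haA]

lemma Eser_eq : Eser N = Eup N 0 := by
  apply PowerSeries.ext
  intro m
  rw [Eser, PowerSeries.coeff_mk, Eup]
  have h0 : Finset.univ.filter (fun i : Fin N => 0 ≤ (i : ℕ)) = Finset.univ :=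
    Finset.filter_true_of_mem (fun i _ => Nat.zero_le _)
  rw [h0, coeff_prodE Finset.univ (fun i => Polynomial.C (MvPolynomial.X i)) m]
  rw [MvPolynomial.esymm, map_sum]
  exact Finset.sum_congr rfl fun A _ => by rw [map_prod]

lemma Esert_eq : Esert N = Elo N N := by
  apply PowerSeries.ext
  intro m
  rw [Esert, PowerSeries.coeff_mk, Elo]
  have h0 : Finset.univ.filter (fun i : Fin N => (i : ℕ) < N) = Finset.univ :=
    Finset.filter_true_of_mem (fun i _ => i.isLt)
  rw [h0, coeff_prodE Finset.univ cE m]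
  rw [MvPolynomial.esymm, map_sum, Finset.sum_mul]
  apply Finset.sum_congr rfl
  intro A hA
  have hcard : A.card = m := (Finset.mem_powersetCard.mp hA).2
  unfold cE
  rw [Finset.prod_mul_distrib, Finset.prod_const, hcard, map_prod]
  ring

lemma Eup_N : Eup N N = 1 := by
  rw [Eup]
  have h : Finset.univ.filter (fun i : Fin N => N ≤ (i : ℕ)) = ∅ := by
    apply Finset.filter_false_of_mem
    intro i _
    have := i.isLt
    omega
  rw [h, Finset.prod_empty]

lemma Elo_zero : Elo N 0 = 1 := by
  rw [Elo]
  have h : Finset.univ.filter (fun i : Fin N => (i : ℕ) < 0) = ∅ := by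
    apply Finset.filter_false_of_mem
    intro i _
    omega
  rw [h, Finset.prod_empty]

lemma Eup_succ (i : Fin N) :
    Eup N (i : ℕ) = (1 + xS i * PowerSeries.X) * Eup N ((i : ℕ) + 1) := by
  have hset : Finset.univ.filter (fun j : Fin N => (i : ℕ) ≤ (j : ℕ))
      = insert i (Finset.univ.filter (fun j : Fin N => (i : ℕ) + 1 ≤ (j : ℕ))) := by
    ext j
    simp only [Finset.mem_filter, Finset.mem_univ, true_and, Finset.mem_insert, Fin.ext_iff]
    omega
  rw [Eup, hset, Finset.prod_insert (by simp), Eup, xS]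

lemma Elo_succ (i : Fin N) :
    Elo N ((i : ℕ) + 1) = (1 + PowerSeries.C (R := R N) (cE i) * PowerSeries.X) * Elo N (i : ℕ) := by
  have hset : Finset.univ.filter (fun j : Fin N => (j : ℕ) < (i : ℕ) + 1)
      = insert i (Finset.univ.filter (fun j : Fin N => (j : ℕ) < (i : ℕ))) := by
    ext j
    simp only [Finset.mem_filter, Finset.mem_univ, true_and, Finset.mem_insert, Fin.ext_iff]
    omega
  rw [Elo, hset, Finset.prod_insert (by simp), Elo]

lemma C_cE (i : Fin N) : PowerSeries.C (R := R N) (cE i) = tS N * xS i := by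
  rw [cE, map_mul, tS, xS]

lemma telescope : ∀ k : ℕ, k ≤ N →
    Eup N 0 - Eup N k * Elo N k
      = ∑ i ∈ Finset.univ.filter (fun i : Fin N => (i : ℕ) < k),
          (1 - tS N) * (xS i * PowerSeries.X) * (Eup N ((i : ℕ) + 1) * Elo N (i : ℕ)) := by
  intro k
  induction k with
  | zero =>
    intro _
    have h : Finset.univ.filter (fun i : Fin N => (i : ℕ) < 0) = ∅ := by
      apply Finset.filter_false_of_mem
      intro i _
      omega
    rw [h, Finset.sum_empty, Elo_zero, mul_one, sub_self]
  | succ k ih =>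
    intro hk
    have hkN : k < N := by omega
    set i₀ : Fin N := ⟨k, hkN⟩ with hi₀
    have hval : (i₀ : ℕ) = k := rfl
    have hset : Finset.univ.filter (fun j : Fin N => (j : ℕ) < k + 1)
        = insert i₀ (Finset.univ.filter (fun j : Fin N => (j : ℕ) < k)) := by
      ext j
      simp only [Finset.mem_filter, Finset.mem_univ, true_and, Finset.mem_insert, Fin.ext_iff,
        hi₀]
      omega
    rw [hset, Finset.sum_insert (by simp [hi₀]), ← ih (by omega), hval]
    have hEup : Eup N k = (1 + xS i₀ * PowerSeries.X) * Eup N (k + 1) := by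
      have := Eup_succ i₀
      rw [hval] at this
      exact this
    have hElo : Elo N (k + 1) = (1 + PowerSeries.C (R := R N) (cE i₀) * PowerSeries.X) * Elo N k := by
      have := Elo_succ i₀
      rw [hval] at this
      exact this
    rw [hEup, hElo, C_cE]
    ring

lemma Dser_Sser (k : ℕ) :
    Dser N * Sser N k = Dlt N k + (Eup N 0 - Eup N k * Elo N k) := by
  rw [Dlt]
  ring

lemma key_lemma (i : Fin N) :
    Dser N * Zser i
      = PowerSeries.X * (xS i *
          ((1 - tS N) * (Eup N ((i : ℕ) + 1) * Elo N (i : ℕ))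
            + (tS N * Dlt N (i : ℕ) + Dlt N N - Dlt N ((i : ℕ) + 1)))) := by
  rw [Zser_eq]
  have hmain : Dser N *
      (1 + tS N * Sser N (i : ℕ) + Sser N N - Sser N ((i : ℕ) + 1))
      = (1 - tS N) * (Eup N ((i : ℕ) + 1) * Elo N (i : ℕ))
          + (tS N * Dlt N (i : ℕ) + Dlt N N - Dlt N ((i : ℕ) + 1)) := by
    have expand : Dser N *
        (1 + tS N * Sser N (i : ℕ) + Sser N N - Sser N ((i : ℕ) + 1))
        = Dser N + tS N * (Dser N * Sser N (i : ℕ)) + Dser N * Sser N N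
            - Dser N * Sser N ((i : ℕ) + 1) := by ring
    rw [expand, Dser_Sser, Dser_Sser, Dser_Sser, Eup_N, Eup_succ i, Elo_succ i, C_cE, Dser]
    ring
  calc Dser N * (PowerSeries.X * (xS i *
      (1 + tS N * Sser N (i : ℕ) + Sser N N - Sser N ((i : ℕ) + 1))))
      = PowerSeries.X * (xS i * (Dser N *
          (1 + tS N * Sser N (i : ℕ) + Sser N N - Sser N ((i : ℕ) + 1)))) := by ring
    _ = _ := by rw [hmain]

lemma Dlt_eq (k : ℕ) (hk : k ≤ N) :
    Dlt N k = ∑ i ∈ Finset.univ.filter (fun i : Fin N => (i : ℕ) < k),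
      PowerSeries.X * (xS i *
        (tS N * Dlt N (i : ℕ) + Dlt N N - Dlt N ((i : ℕ) + 1))) := by
  rw [Dlt, Sser, Finset.mul_sum, telescope k hk, ← Finset.sum_sub_distrib]
  apply Finset.sum_congr rfl
  intro i _
  rw [key_lemma i]
  ring

lemma Dlt_coeff : ∀ n : ℕ, ∀ k : ℕ, k ≤ N → PowerSeries.coeff (R := R N) n (Dlt N k) = 0 := by
  intro n
  induction n using Nat.strong_induction_on with
  | _ n ih =>
    intro k hk
    rw [Dlt_eq k hk, map_sum]
    apply Finset.sum_eq_zero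
    intro i _
    cases n with
    | zero =>
      rw [PowerSeries.coeff_zero_eq_constantCoeff, map_mul, PowerSeries.constantCoeff_X,
        zero_mul]
    | succ m =>
      rw [PowerSeries.coeff_succ_X_mul, xS, PowerSeries.coeff_C_mul, map_sub, map_add,
        tS, PowerSeries.coeff_C_mul]
      rw [ih m (by omega) (i : ℕ) (by have := i.isLt; omega),
        ih m (by omega) N le_rfl,
        ih m (by omega) ((i : ℕ) + 1) (by have := i.isLt; omega)]
      ring

lemma Dlt_N_zero : Dlt N N = 0 := by
  apply PowerSeries.ext
  intro n
  rw [Dlt_coeff n N le_rfl, map_zero]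

lemma Ymk_eq :
    (PowerSeries.mk fun n =>
        ∑ j ∈ Finset.range (n + 1), Polynomial.C (smirnovY N n j) * Polynomial.X ^ j)
      = 1 + Sser N N := by
  apply PowerSeries.ext
  intro n
  rw [PowerSeries.coeff_mk, ← Pp_eq, map_add]
  cases n with
  | zero =>
    rw [Pp_zero, coeff_Sser_zero, PowerSeries.coeff_zero_eq_constantCoeff, map_one, add_zero]
  | succ m =>
    rw [Pp_succ, coeff_Sser_succ, PowerSeries.coeff_one, if_neg (by omega), zero_add]
    apply Finset.sum_congr _ (fun _ _ => rfl)
    rw [Finset.filter_true_of_mem (fun j _ => j.isLt)]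

end Algebra

end SmirnovAux

/-- the Smirnov word identity
`(E(tz) - t·E(z)) · (∑_{n,j≥0} Y_{n,j} t^j z^n) = (1-t)·E(z)`. -/
theorem smirnov_generating_function (N : ℕ) (hN : 1 ≤ N) :
    (Esert N - tConst N * Eser N) *
      (PowerSeries.mk fun n =>
        ∑ j ∈ Finset.range (n + 1), Polynomial.C (smirnovY N n j) * Polynomial.X ^ j) =
    (1 - tConst N) * Eser N := by
  classical
  rw [SmirnovAux.Ymk_eq, SmirnovAux.Eser_eq, SmirnovAux.Esert_eq]
  have ht : tConst N = SmirnovAux.tS N := rfl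
  rw [ht]
  have hD : SmirnovAux.Dser N = SmirnovAux.Elo N N - SmirnovAux.tS N * SmirnovAux.Eup N 0 :=
    rfl
  have h1 : (SmirnovAux.Elo N N - SmirnovAux.tS N * SmirnovAux.Eup N 0) *
      (1 + SmirnovAux.Sser N N)
      = SmirnovAux.Dser N + SmirnovAux.Dser N * SmirnovAux.Sser N N := by
    rw [hD]; ring
  rw [h1, SmirnovAux.Dser_Sser, SmirnovAux.Dlt_N_zero, SmirnovAux.Eup_N, hD]
  ring
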